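/- Let G > 0 and s ≥ 0, let t₀ ∈ ℝ, and let a : [t₀,∞) → ℝ be differentiable with a(t) > 0, a'(t) > 0 for all t, and a(t) → ∞ as t → ∞. Suppose χ : [t₀,∞) → (0,π) satisfies a'(t) − 2Gs/a(t)² = cos(χ(t))/sin(χ(t)) for all t ≥ t₀, and suppose S(t) = (π/G)·sin²(χ(t))·a(t)² + 2π·(χ(t) − sin(χ(t))·cos(χ(t)))·s converges to a finite positive limit S_max as t → ∞. Then sin(χ(t))·a(t) → √(G·S_max/π), χ(t) → 0, and a'(t)/a(t) → √(π/(G·S_max)) as t → ∞. -/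

import Mathlib

open Real Filter

/-- Cosmic no-hair theorem for closed Robertson-Walker spacetimes. -/
theorem stmt_2 (G s t₀ Smax : ℝ) (hG : 0 < G) (hs : 0 ≤ s)
    (a χ : ℝ → ℝ)
    (ha_diff : ∀ t, t₀ ≤ t → DifferentiableAt ℝ a t)
    (ha_pos : ∀ t, t₀ ≤ t → 0 < a t)
    (ha_incr : ∀ t, t₀ ≤ t → 0 < deriv a t)
    (ha_inf : Tendsto a atTop atTop)
    (hχ_mem : ∀ t, t₀ ≤ t → χ t ∈ Set.Ioo (0:ℝ) π)
    (hχ_eq : ∀ t, t₀ ≤ t →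
      deriv a t - 2 * G * s / (a t) ^ 2 = Real.cos (χ t) / Real.sin (χ t))
    (hSmax : 0 < Smax)
    (hS : Tendsto (fun t => (π / G) * (Real.sin (χ t)) ^ 2 * (a t) ^ 2 +
        2 * π * (χ t - Real.sin (χ t) * Real.cos (χ t)) * s)
      atTop (nhds Smax)) :
    Tendsto (fun t => Real.sin (χ t) * a t) atTop (nhds (Real.sqrt (G * Smax / π))) ∧
    Tendsto χ atTop (nhds 0) ∧
    Tendsto (fun t => deriv a t / a t) atTop (nhds (Real.sqrt (π / (G * Smax)))) := by
  have hπ : (0:ℝ) < π := Real.pi_pos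
  set F : ℝ → ℝ := fun t => (π / G) * (Real.sin (χ t)) ^ 2 * (a t) ^ 2 +
      2 * π * (χ t - Real.sin (χ t) * Real.cos (χ t)) * s with hF
  have hev : ∀ᶠ t in atTop, t₀ ≤ t := eventually_ge_atTop t₀
  have hsin_pos : ∀ᶠ t in atTop, 0 < Real.sin (χ t) :=
    hev.mono fun t ht => Real.sin_pos_of_pos_of_lt_pi (hχ_mem t ht).1 (hχ_mem t ht).2
  -- entropy term is nonnegative
  have hg_nonneg : ∀ᶠ t in atTop, 0 ≤ 2 * π * (χ t - Real.sin (χ t) * Real.cos (χ t)) * s := by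
    refine hev.mono fun t ht => ?_
    have h1 : Real.sin (2 * χ t) ≤ 2 * χ t :=
      Real.sin_le (by linarith [(hχ_mem t ht).1])
    rw [Real.sin_two_mul] at h1
    have h2 : 0 ≤ χ t - Real.sin (χ t) * Real.cos (χ t) := by linarith
    positivity
  -- sin χ → 0 by squeeze
  have hsin0 : Tendsto (fun t => Real.sin (χ t)) atTop (nhds 0) := by
    have hbd : ∀ᶠ t in atTop, Real.sin (χ t) ≤ Real.sqrt ((G / π) * F t) / a t := by
      filter_upwards [hev, hsin_pos, hg_nonneg] with t ht hsp hg
      have hap := ha_pos t ht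
      rw [le_div_iff₀ hap]
      have h1 : (Real.sin (χ t) * a t) ^ 2 ≤ (G / π) * F t := by
        have : (G / π) * ((π / G) * (Real.sin (χ t)) ^ 2 * (a t) ^ 2) =
            (Real.sin (χ t) * a t) ^ 2 := by field_simp
        have hGπ : 0 < G / π := by positivity
        nlinarith [mul_le_mul_of_nonneg_left hg (le_of_lt hGπ)]
      exact (Real.le_sqrt (by positivity) (le_trans (sq_nonneg _) h1)).2 h1
    have hmaj : Tendsto (fun t => Real.sqrt ((G / π) * F t) / a t) atTop (nhds 0) := by
      have h1 : Tendsto (fun t => Real.sqrt ((G / π) * F t)) atTop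
          (nhds (Real.sqrt ((G / π) * Smax))) :=
        (Real.continuous_sqrt.continuousAt.tendsto).comp (hS.const_mul (G / π))
      have h2 : Tendsto (fun t => (a t)⁻¹) atTop (nhds 0) := ha_inf.inv_tendsto_atTop
      simpa [div_eq_mul_inv] using h1.mul h2
    refine tendsto_of_tendsto_of_tendsto_of_le_of_le' tendsto_const_nhds hmaj
      (hsin_pos.mono fun t ht => le_of_lt ht) hbd
  -- eventually 2 G s / a² < 1
  have ha2 : Tendsto (fun t => 2 * G * s / (a t) ^ 2) atTop (nhds 0) := by
    have h2 : Tendsto (fun t => ((a t) ^ 2)⁻¹) atTop (nhds 0) :=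
      (((tendsto_pow_atTop (two_ne_zero)).comp ha_inf)).inv_tendsto_atTop
    simpa [div_eq_mul_inv] using h2.const_mul (2 * G * s)
  have hsmall : ∀ᶠ t in atTop, 2 * G * s / (a t) ^ 2 < 1 := by
    have := ha2.eventually (gt_mem_nhds (show (0:ℝ) < 1 by norm_num))
    exact this
  have hsinsmall : ∀ᶠ t in atTop, Real.sin (χ t) < 1/2 := by
    have := hsin0.eventually (gt_mem_nhds (show (0:ℝ) < 1/2 by norm_num))
    exact this
  -- eventually cos χ > 0
  have hcos_pos : ∀ᶠ t in atTop, 0 < Real.cos (χ t) := by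
    filter_upwards [hev, hsin_pos, hsmall, hsinsmall] with t ht hsp hsm hss
    by_contra hc
    push_neg at hc
    have heq := hχ_eq t ht
    have hq : -1 < Real.cos (χ t) / Real.sin (χ t) := by
      have := ha_incr t ht; linarith
    have hcos : Real.cos (χ t) = (Real.cos (χ t) / Real.sin (χ t)) * Real.sin (χ t) := by
      field_simp
    have h1 : -Real.sin (χ t) < Real.cos (χ t) := by
      rw [hcos]; nlinarith
    have hpyth := Real.sin_sq_add_cos_sq (χ t)
    nlinarith
  -- eventually χ < π/2
  have hχlt : ∀ᶠ t in atTop, χ t < π / 2 := by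
    filter_upwards [hev, hcos_pos] with t ht hcp
    by_contra hc
    push_neg at hc
    have := Real.cos_nonpos_of_pi_div_two_le_of_le hc
      (by linarith [(hχ_mem t ht).2])
    linarith
  -- χ → 0
  have hχ0 : Tendsto χ atTop (nhds 0) := by
    have h1 : Tendsto (fun t => Real.arcsin (Real.sin (χ t))) atTop (nhds 0) := by
      have := (Real.continuous_arcsin.continuousAt.tendsto).comp hsin0
      simpa [Function.comp_def] using this
    refine h1.congr' ?_
    filter_upwards [hev, hχlt] with t ht hlt
    exact Real.arcsin_sin (by linarith [(hχ_mem t ht).1]) (le_of_lt hlt)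
  -- cos χ → 1
  have hcos1 : Tendsto (fun t => Real.cos (χ t)) atTop (nhds 1) := by
    have := (Real.continuous_cos.continuousAt.tendsto).comp hχ0
    simpa [Function.comp_def] using this
  -- entropy term → 0
  have hg0 : Tendsto (fun t => 2 * π * (χ t - Real.sin (χ t) * Real.cos (χ t)) * s)
      atTop (nhds 0) := by
    have h1 : Tendsto (fun t => χ t - Real.sin (χ t) * Real.cos (χ t)) atTop (nhds 0) := by
      have := hχ0.sub (hsin0.mul hcos1)
      simpa using this
    have := (h1.const_mul (2 * π)).mul_const s
    simpa using this
  -- area term → Smax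
  have hf : Tendsto (fun t => (π / G) * (Real.sin (χ t)) ^ 2 * (a t) ^ 2) atTop (nhds Smax) := by
    have h := hS.sub hg0
    rw [sub_zero] at h
    refine h.congr fun t => ?_
    simp only [hF]
    ring
  -- (sin χ * a)² → G Smax / π
  have hX : Tendsto (fun t => (Real.sin (χ t) * a t) ^ 2) atTop (nhds (G * Smax / π)) := by
    have h1 := hf.const_mul (G / π)
    have heq : ∀ t, (G / π) * ((π / G) * (Real.sin (χ t)) ^ 2 * (a t) ^ 2) =
        (Real.sin (χ t) * a t) ^ 2 := fun t => by field_simp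
    have h2 : (G / π) * Smax = G * Smax / π := by ring
    rw [← h2]
    exact h1.congr heq
  -- sin χ * a → √(G Smax / π)
  have hL : Tendsto (fun t => Real.sin (χ t) * a t) atTop
      (nhds (Real.sqrt (G * Smax / π))) := by
    have h1 := (Real.continuous_sqrt.continuousAt.tendsto).comp hX
    refine Tendsto.congr' ?_ h1
    filter_upwards [hev, hsin_pos] with t ht hsp
    exact Real.sqrt_sq (mul_nonneg hsp.le (ha_pos t ht).le)
  refine ⟨hL, hχ0, ?_⟩
  -- Hubble rate
  have hLpos : 0 < Real.sqrt (G * Smax / π) := Real.sqrt_pos.2 (by positivity)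
  have h1 : Tendsto (fun t => Real.cos (χ t) / (Real.sin (χ t) * a t)) atTop
      (nhds (1 / Real.sqrt (G * Smax / π))) :=
    hcos1.div hL (ne_of_gt hLpos)
  have h2 : Tendsto (fun t => 2 * G * s / (a t) ^ 3) atTop (nhds 0) := by
    have h3 : Tendsto (fun t => ((a t) ^ 3)⁻¹) atTop (nhds 0) :=
      (((tendsto_pow_atTop (three_ne_zero)).comp ha_inf)).inv_tendsto_atTop
    simpa [div_eq_mul_inv] using h3.const_mul (2 * G * s)
  have hval : 1 / Real.sqrt (G * Smax / π) = Real.sqrt (π / (G * Smax)) := by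
    rw [one_div, ← Real.sqrt_inv, inv_div]
  have h4 := h1.add h2
  rw [add_zero, hval] at h4
  refine Tendsto.congr' ?_ h4
  filter_upwards [hev, hsin_pos] with t ht hsp
  have hap := ha_pos t ht
  have heq := hχ_eq t ht
  have hda : deriv a t = Real.cos (χ t) / Real.sin (χ t) + 2 * G * s / (a t) ^ 2 := by
    linarith
  rw [hda]
  field_simp
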